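/- arXiv:math/0504079 — 3 statements merged into one kernel-verified Lean document; each statement's English description precedes it below -/
import Mathlib

section
/- Let n ≥ 3, let X_u, X_v ∈ ℝⁿ satisfy |X_u|² = |X_v|² = W, X_u·X_v = 0 with W > 0, and let ω ∈ (0, π/2]. Suppose that every unit vector N ∈ ℝⁿ orthogonal to both X_u and X_v satisfies |N·e_1| ≤ cos ω, where e_1 = (1,0,…,0). Then (X_u·e_1)² + (X_v·e_1)² ≥ W sin²ω. -/
open scoped RealInnerProductSpace
open Real

noncomputable section

abbrev E (n : ℕ) : Type := EuclideanSpace ℝ (Fin n)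

/-- **Osserman-type interpolation inequality.** If `X_u, X_v` span a conformal tangent
plane with area element `W > 0` and every unit normal `N` makes an angle of at least `ω`
with the `x¹`-axis (i.e. `|N·e₁| ≤ cos ω`), then `(X_u·e₁)² + (X_v·e₁)² ≥ W sin²ω`. -/
theorem osserman_interpolation
    (n : ℕ) (hn : 3 ≤ n)
    (Xu Xv : E n) (W : ℝ) (hW : 0 < W)
    (hXu : ⟪Xu, Xu⟫ = W) (hXv : ⟪Xv, Xv⟫ = W) (hXuXv : ⟪Xu, Xv⟫ = 0)
    (ω : ℝ) (hω : ω ∈ Set.Ioc 0 (π / 2))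
    (e₁ : E n) (he₁ : e₁ = EuclideanSpace.single (⟨0, by omega⟩ : Fin n) 1)
    (hnormal : ∀ N : E n, ‖N‖ = 1 → ⟪N, Xu⟫ = 0 → ⟪N, Xv⟫ = 0 →
      |⟪N, e₁⟫| ≤ Real.cos ω) :
    W * Real.sin ω ^ 2 ≤ ⟪Xu, e₁⟫ ^ 2 + ⟪Xv, e₁⟫ ^ 2 := by
  obtain ⟨a, ha⟩ : ∃ a : ℝ, a = ⟪Xu, e₁⟫ := ⟨_, rfl⟩
  obtain ⟨b, hb⟩ : ∃ b : ℝ, b = ⟪Xv, e₁⟫ := ⟨_, rfl⟩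
  rw [← ha, ← hb]
  have he : ⟪e₁, e₁⟫ = (1:ℝ) := by
    rw [he₁]
    simp [EuclideanSpace.inner_single_left, EuclideanSpace.single_apply]
  obtain ⟨P, hP⟩ : ∃ P : E n, P = e₁ - (a / W) • Xu - (b / W) • Xv := ⟨_, rfl⟩
  have hXvXu : ⟪Xv, Xu⟫ = 0 := by rw [real_inner_comm]; exact hXuXv
  have hW0 : W ≠ 0 := hW.ne'
  have hPu : ⟪P, Xu⟫ = 0 := by
    rw [hP, inner_sub_left, inner_sub_left, real_inner_smul_left, real_inner_smul_left,
      hXu, hXvXu, real_inner_comm Xu e₁, ← ha]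
    field_simp
    ring
  have hPv : ⟪P, Xv⟫ = 0 := by
    rw [hP, inner_sub_left, inner_sub_left, real_inner_smul_left, real_inner_smul_left,
      hXv, hXuXv, real_inner_comm Xv e₁, ← hb]
    field_simp
    ring
  have hPe : ⟪P, e₁⟫ = 1 - a ^ 2 / W - b ^ 2 / W := by
    rw [hP, inner_sub_left, inner_sub_left, real_inner_smul_left, real_inner_smul_left,
      he, ← ha, ← hb]
    ring
  have hPP : ⟪P, P⟫ = 1 - a ^ 2 / W - b ^ 2 / W := by
    nth_rewrite 2 [hP]
    rw [inner_sub_right, inner_sub_right, real_inner_smul_right, real_inner_smul_right,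
      hPu, hPv, hPe]
    ring
  have hcos : 0 ≤ Real.cos ω := Real.cos_nonneg_of_mem_Icc
    ⟨by linarith [hω.1, Real.pi_pos], hω.2⟩
  have hsin : Real.sin ω ^ 2 ≤ 1 := Real.sin_sq_le_one ω
  by_cases hP0 : P = 0
  · have h0 : (1:ℝ) - a ^ 2 / W - b ^ 2 / W = 0 := by rw [← hPP, hP0, inner_zero_left]
    have hab : a ^ 2 + b ^ 2 = W := by field_simp at h0; linarith
    have h5 : W * Real.sin ω ^ 2 ≤ W * 1 := mul_le_mul_of_nonneg_left hsin hW.le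
    linarith
  · have hPn : 0 < ‖P‖ := norm_pos_iff.mpr hP0
    obtain ⟨N, hN⟩ : ∃ N : E n, N = ‖P‖⁻¹ • P := ⟨_, rfl⟩
    have hNnorm : ‖N‖ = 1 := by
      rw [hN, norm_smul, norm_inv, norm_norm, inv_mul_cancel₀ hPn.ne']
    have hNe : ⟪N, e₁⟫ = ‖P‖ := by
      rw [hN, real_inner_smul_left]
      have h2 : ⟪P, e₁⟫ = ‖P‖ ^ 2 := by rw [hPe, ← hPP, real_inner_self_eq_norm_sq]
      rw [h2]
      field_simp
    have hle : ‖P‖ ≤ Real.cos ω := by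
      have h3 := hnormal N hNnorm
        (by rw [hN, real_inner_smul_left, hPu, mul_zero])
        (by rw [hN, real_inner_smul_left, hPv, mul_zero])
      rwa [hNe, abs_of_pos hPn] at h3
    have hsq : ‖P‖ ^ 2 ≤ Real.cos ω ^ 2 := by
      have := pow_le_pow_left₀ (norm_nonneg P) hle 2
      linarith
    have hnormsq : ‖P‖ ^ 2 = 1 - a ^ 2 / W - b ^ 2 / W := by
      rw [← real_inner_self_eq_norm_sq, hPP]
    have hcossq : Real.cos ω ^ 2 = 1 - Real.sin ω ^ 2 := Real.cos_sq' ω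
    rw [hnormsq, hcossq] at hsq
    have h4 : Real.sin ω ^ 2 ≤ a ^ 2 / W + b ^ 2 / W := by linarith
    calc W * Real.sin ω ^ 2 ≤ W * (a ^ 2 / W + b ^ 2 / W) :=
        mul_le_mul_of_nonneg_left h4 hW.le
      _ = a ^ 2 + b ^ 2 := by field_simp
end
end

section
/- Let X = (x¹,…,x⁴) : B → ℝ⁴ be a C² conformally parametrized immersion with area element W satisfying |ΔX(w)| ≤ 4 h_0 W(w) on B for a constant h_0 ≥ 0, and suppose |∇x¹(w)|² ≥ W(w) sin²ω on B for some ω ∈ (0, π/2]. Let F*(w) = (x¹(w), x²(w)) denote the associated plane mapping. Then for all w ∈ B: (i) |ΔF*(w)| ≤ (4 h_0 / sin²ω) |∇F*(w)|², and (ii) |∇X(w)|² ≤ (2 / sin²ω) |∇F*(w)|². -/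
open scoped RealInnerProductSpace
open Metric Real

noncomputable section

abbrev E2 : Type := EuclideanSpace ℝ (Fin 2)
abbrev E4 : Type := EuclideanSpace ℝ (Fin 4)

/-- Partial derivative of a map defined on `ℝ²` in the `i`-th coordinate direction. -/
def pd {F : Type*} [NormedAddCommGroup F] [NormedSpace ℝ F]
    (X : E2 → F) (i : Fin 2) (w : E2) : F :=
  fderiv ℝ X w (EuclideanSpace.single i 1)

/-- Second partial derivative. -/
def pd2 {F : Type*} [NormedAddCommGroup F] [NormedSpace ℝ F]
    (X : E2 → F) (i j : Fin 2) (w : E2) : F :=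
  pd (pd X i) j w

/-- Partial derivative of a scalar function on `ℝ²`. -/
def pdR (f : E2 → ℝ) (i : Fin 2) (w : E2) : ℝ :=
  fderiv ℝ f w (EuclideanSpace.single i 1)

/-- Projection of `ℝ⁴` onto the first two coordinates. -/
def Lmap : E4 →L[ℝ] E2 :=
  (EuclideanSpace.equiv (Fin 2) ℝ).symm.toContinuousLinearMap.comp
    (ContinuousLinearMap.pi fun i : Fin 2 => EuclideanSpace.proj (i.castLE (by norm_num)))

lemma Lmap_apply0 (y : E4) : Lmap y 0 = y 0 := rfl
lemma Lmap_apply1 (y : E4) : Lmap y 1 = y 1 := rfl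

lemma normsq_E2 (y : E2) : ‖y‖ ^ 2 = y 0 ^ 2 + y 1 ^ 2 := by
  rw [EuclideanSpace.norm_eq, Real.sq_sqrt (by positivity)]
  simp [Fin.sum_univ_two, Real.norm_eq_abs, sq_abs]

lemma normsq_E4 (y : E4) : ‖y‖ ^ 2 = y 0 ^ 2 + y 1 ^ 2 + y 2 ^ 2 + y 3 ^ 2 := by
  rw [EuclideanSpace.norm_eq, Real.sq_sqrt (by positivity)]
  simp [Fin.sum_univ_four, Real.norm_eq_abs, sq_abs]

lemma norm_Lmap_le (y : E4) : ‖Lmap y‖ ≤ ‖y‖ := by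
  rw [← Real.sqrt_sq (norm_nonneg (Lmap y)), ← Real.sqrt_sq (norm_nonneg y)]
  apply Real.sqrt_le_sqrt
  rw [normsq_E2, normsq_E4, Lmap_apply0, Lmap_apply1]
  nlinarith [sq_nonneg (y 2), sq_nonneg (y 3)]

/-- Estimates for the plane mapping `F* = (x¹, x²)` of a conformally parametrized
surface in `ℝ⁴` with `|ΔX| ≤ 4h₀W` whose normals make an angle at least `ω` with the
`x¹`-axis: (i) `|ΔF*| ≤ (4h₀/sin²ω)|∇F*|²` and (ii) `|∇X|² ≤ (2/sin²ω)|∇F*|²`. -/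
theorem plane_mapping_estimates
    (X : E2 → E4)
    (hX : ContDiffOn ℝ 2 X (ball (0 : E2) 1))
    (W : E2 → ℝ)
    (hconf : ∀ w ∈ ball (0 : E2) 1,
      ⟪pd X 0 w, pd X 0 w⟫ = W w ∧ ⟪pd X 1 w, pd X 1 w⟫ = W w ∧
      ⟪pd X 0 w, pd X 1 w⟫ = 0 ∧ 0 < W w)
    (h₀ : ℝ) (hh₀ : 0 ≤ h₀)
    (hΔX : ∀ w ∈ ball (0 : E2) 1,
      ‖pd2 X 0 0 w + pd2 X 1 1 w‖ ≤ 4 * h₀ * W w)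
    (ω : ℝ) (hω : ω ∈ Set.Ioc 0 (π / 2))
    (hOsserman : ∀ w ∈ ball (0 : E2) 1,
      W w * Real.sin ω ^ 2 ≤
        pdR (fun w' => X w' 0) 0 w ^ 2 + pdR (fun w' => X w' 0) 1 w ^ 2)
    (F : E2 → E2)
    (hFdef : ∀ w, F w = (WithLp.equiv 2 (Fin 2 → ℝ)).symm ![X w 0, X w 1]) :
    ∀ w ∈ ball (0 : E2) 1,
      ‖pd2 F 0 0 w + pd2 F 1 1 w‖ ≤
          (4 * h₀ / Real.sin ω ^ 2) * (‖pd F 0 w‖ ^ 2 + ‖pd F 1 w‖ ^ 2) ∧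
      ‖pd X 0 w‖ ^ 2 + ‖pd X 1 w‖ ^ 2 ≤
          (2 / Real.sin ω ^ 2) * (‖pd F 0 w‖ ^ 2 + ‖pd F 1 w‖ ^ 2) := by
  have hs : 0 < Real.sin ω :=
    Real.sin_pos_of_pos_of_lt_pi hω.1 (lt_of_le_of_lt hω.2 (by linarith [Real.pi_pos]))
  have hs2 : 0 < Real.sin ω ^ 2 := pow_pos hs 2
  have hopen : IsOpen (ball (0 : E2) 1) := isOpen_ball
  -- `F = Lmap ∘ X`
  have hFeq : F = fun w' => Lmap (X w') := by
    funext w'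
    rw [hFdef]
    ext i; fin_cases i <;> rfl
  -- differentiability of X on the ball
  have hXd : ∀ w' ∈ ball (0 : E2) 1, DifferentiableAt ℝ X w' := fun w' hw' =>
    (hX.contDiffAt (hopen.mem_nhds hw')).differentiableAt (by norm_num)
  -- first derivatives of F
  have hpdF : ∀ (i : Fin 2), ∀ w' ∈ ball (0 : E2) 1,
      pd F i w' = Lmap (pd X i w') := by
    intro i w' hw'
    have : fderiv ℝ F w' = Lmap.comp (fderiv ℝ X w') := by
      rw [hFeq]
      exact (Lmap.hasFDerivAt.comp w' (hXd w' hw').hasFDerivAt).fderiv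
    simp [pd, this]
  -- C¹ regularity of the first partials of X
  have hpdXc : ∀ i : Fin 2, ContDiffOn ℝ 1 (pd X i) (ball (0 : E2) 1) := by
    intro i
    exact (hX.fderiv_of_isOpen hopen (by norm_num)).clm_apply contDiffOn_const
  have hpdXd : ∀ (i : Fin 2), ∀ w' ∈ ball (0 : E2) 1, DifferentiableAt ℝ (pd X i) w' :=
    fun i w' hw' => ((hpdXc i).contDiffAt (hopen.mem_nhds hw')).differentiableAt one_ne_zero
  -- second derivatives of F
  have hpd2F : ∀ (i j : Fin 2), ∀ w' ∈ ball (0 : E2) 1,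
      pd2 F i j w' = Lmap (pd2 X i j w') := by
    intro i j w' hw'
    have hev : pd F i =ᶠ[nhds w'] fun z => Lmap (pd X i z) :=
      Filter.eventually_of_mem (hopen.mem_nhds hw') (hpdF i)
    have : fderiv ℝ (pd F i) w' = Lmap.comp (fderiv ℝ (pd X i) w') := by
      rw [hev.fderiv_eq]
      exact (Lmap.hasFDerivAt.comp w' (hpdXd i w' hw').hasFDerivAt).fderiv
    simp [pd2, pd, this]
  -- relating pdR of the first component to pd X
  have hpdR : ∀ (i : Fin 2), ∀ w' ∈ ball (0 : E2) 1,
      pdR (fun z => X z 0) i w' = pd X i w' 0 := by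
    intro i w' hw'
    have : fderiv ℝ (⇑(EuclideanSpace.proj (0 : Fin 4)) ∘ X) w' =
        (EuclideanSpace.proj (0 : Fin 4)).comp (fderiv ℝ X w') :=
      ((EuclideanSpace.proj (0 : Fin 4)).hasFDerivAt.comp w'
        (hXd w' hw').hasFDerivAt).fderiv
    rw [show (fun z => X z 0) = ⇑(EuclideanSpace.proj (0 : Fin 4)) ∘ X from rfl] at *
    exact (congrArg (fun L => L (EuclideanSpace.single i 1)) this).trans rfl
  intro w hw
  obtain ⟨h00, h11, h01, hW⟩ := hconf w hw
  -- the key lower bound for |∇F|²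
  have hG : W w * Real.sin ω ^ 2 ≤ ‖pd F 0 w‖ ^ 2 + ‖pd F 1 w‖ ^ 2 := by
    have h1 := hOsserman w hw
    rw [hpdR 0 w hw, hpdR 1 w hw] at h1
    have e0 : ‖pd F 0 w‖ ^ 2 = pd X 0 w 0 ^ 2 + pd X 0 w 1 ^ 2 := by
      rw [hpdF 0 w hw, normsq_E2, Lmap_apply0, Lmap_apply1]
    have e1 : ‖pd F 1 w‖ ^ 2 = pd X 1 w 0 ^ 2 + pd X 1 w 1 ^ 2 := by
      rw [hpdF 1 w hw, normsq_E2, Lmap_apply0, Lmap_apply1]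
    rw [e0, e1]
    nlinarith [sq_nonneg (pd X 0 w 1), sq_nonneg (pd X 1 w 1)]
  constructor
  · -- (i)
    have hLap : ‖pd2 F 0 0 w + pd2 F 1 1 w‖ ≤ 4 * h₀ * W w := by
      rw [hpd2F 0 0 w hw, hpd2F 1 1 w hw, ← map_add]
      exact (norm_Lmap_le _).trans (hΔX w hw)
    refine hLap.trans ?_
    rw [div_mul_eq_mul_div, le_div_iff₀ hs2]
    nlinarith
  · -- (ii)
    have e0 : ‖pd X 0 w‖ ^ 2 = W w := by rw [← real_inner_self_eq_norm_sq]; exact h00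
    have e1 : ‖pd X 1 w‖ ^ 2 = W w := by rw [← real_inner_self_eq_norm_sq]; exact h11
    rw [e0, e1, div_mul_eq_mul_div, le_div_iff₀ hs2]
    nlinarith
end
end

section
/- Let f : B → (0,∞), let ν_0 ∈ (0, 1/2], set ν = ν_0/2, and let c_4, c_5 > 0. Assume: (i) for every a ∈ ℝ² with |a| < 1 − ν_0 and every w ∈ B_ν(a) one has c_4 f(w)⁵ ≤ f(a); (ii) there exists w* with |w*| < 1 − ν_0 and f(w*) ≥ c_5. Then there exists a constant C_1 > 0 depending only on c_4, c_5 and ν_0 (explicitly, C_1 = c_4^{1+5+5²+…+5^{n−1}} c_5^{5ⁿ} for any integer n with 1 − 2ν ≤ nν/2 ≤ 1 − ν) such that f(w) ≥ C_1 for all w ∈ B_{1/2}(0,0). -/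
open Metric Real

noncomputable section

/-- **Iteration of the Harnack inequality.** If `c₄ f(w)⁵ ≤ f(a)` whenever
`|a| < 1 − ν₀` and `w ∈ B_ν(a)` (with `ν = ν₀/2`), and `f(w*) ≥ c₅` for some point
`w*` with `|w*| < 1 − ν₀`, then `f ≥ C₁ > 0` on `B_{1/2}(0)`, where
`C₁ = c₄^{1+5+…+5^{n−1}} c₅^{5ⁿ}` for any integer `n` with `1−2ν ≤ nν/2 ≤ 1−ν`. -/
theorem harnack_chain_lower_bound
    (f : E2 → ℝ) (hf : ∀ w ∈ ball (0 : E2) 1, 0 < f w)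
    (ν₀ : ℝ) (hν₀ : ν₀ ∈ Set.Ioc (0 : ℝ) (1 / 2))
    (ν : ℝ) (hν : ν = ν₀ / 2)
    (c₄ c₅ : ℝ) (hc₄ : 0 < c₄) (hc₅ : 0 < c₅)
    (hchain : ∀ a : E2, ‖a‖ < 1 - ν₀ → ∀ w ∈ ball a ν, c₄ * f w ^ 5 ≤ f a)
    (hpoint : ∃ wstar : E2, ‖wstar‖ < 1 - ν₀ ∧ c₅ ≤ f wstar) :
    (∀ n : ℕ, 1 - 2 * ν ≤ n * ν / 2 → n * ν / 2 ≤ 1 - ν →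
        ∀ w ∈ ball (0 : E2) (1 / 2),
          c₄ ^ (∑ j ∈ Finset.range n, 5 ^ j) * c₅ ^ 5 ^ n ≤ f w) ∧
      ∃ C₁ : ℝ, 0 < C₁ ∧
        (∃ n : ℕ, 1 - 2 * ν ≤ n * ν / 2 ∧ n * ν / 2 ≤ 1 - ν ∧
          C₁ = c₄ ^ (∑ j ∈ Finset.range n, 5 ^ j) * c₅ ^ 5 ^ n) ∧
        ∀ w ∈ ball (0 : E2) (1 / 2), C₁ ≤ f w := by
  obtain ⟨hν0pos, hν0le⟩ := hν₀
  have hνpos : 0 < ν := by rw [hν]; linarith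
  have hν4 : ν ≤ 1 / 4 := by rw [hν]; linarith
  obtain ⟨ws, hws, hfws⟩ := hpoint
  have key : ∀ n : ℕ, 1 - 2 * ν ≤ n * ν / 2 → n * ν / 2 ≤ 1 - ν →
      ∀ w ∈ ball (0 : E2) (1 / 2),
        c₄ ^ (∑ j ∈ Finset.range n, 5 ^ j) * c₅ ^ 5 ^ n ≤ f w := by
    intro n hn1 hn2 w hw
    have hwn : ‖w‖ < 1 / 2 := by simpa using hw
    have hne : n ≠ 0 := by rintro rfl; simp at hn1; linarith
    have hn0 : (0 : ℝ) < n := by exact_mod_cast Nat.pos_of_ne_zero hne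
    have hwsn : ‖ws‖ < 1 - 2 * ν := by rw [hν] at *; linarith
    have hd : ‖ws - w‖ < n * ν := by
      have h2 := norm_sub_le ws w
      linarith
    set A : ℕ → E2 := fun k => w + ((k : ℝ) / n) • (ws - w) with hA
    have hAnorm : ∀ k, k ≤ n → ‖A k‖ < 1 - ν₀ := by
      intro k hk
      set t : ℝ := (k : ℝ) / n with ht
      have ht0 : 0 ≤ t := div_nonneg (Nat.cast_nonneg k) hn0.le
      have ht1 : t ≤ 1 := by
        rw [ht, div_le_one hn0]; exact_mod_cast hk
      have heq : A k = (1 - t) • w + t • ws := by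
        simp only [hA]; module
      calc ‖A k‖ ≤ (1 - t) * ‖w‖ + t * ‖ws‖ := by
            rw [heq]
            refine (norm_add_le _ _).trans ?_
            rw [norm_smul, norm_smul, Real.norm_of_nonneg (by linarith),
              Real.norm_of_nonneg ht0]
        _ ≤ max ‖w‖ ‖ws‖ := by
            have h1 : ‖w‖ ≤ max ‖w‖ ‖ws‖ := le_max_left _ _
            have h2 : ‖ws‖ ≤ max ‖w‖ ‖ws‖ := le_max_right _ _
            nlinarith
        _ < 1 - ν₀ := max_lt (by linarith) hws
    have hstep : ∀ k, A (k + 1) ∈ ball (A k) ν := by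
      intro k
      rw [mem_ball, dist_eq_norm]
      have hdiff : A (k + 1) - A k = ((1 : ℝ) / n) • (ws - w) := by
        have h1 : ((k + 1 : ℕ) : ℝ) / n - (k : ℝ) / n = 1 / n := by
          push_cast; field_simp; ring
        simp only [hA]
        rw [← h1]; module
      rw [hdiff, norm_smul, Real.norm_of_nonneg (by positivity)]
      rw [div_mul_eq_mul_div, one_mul, div_lt_iff₀ hn0]
      linarith
    have main : ∀ k, k ≤ n →
        c₄ ^ (∑ j ∈ Finset.range k, 5 ^ j) * c₅ ^ 5 ^ k ≤ f (A (n - k)) := by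
      intro k
      induction k with
      | zero =>
        intro _
        have hAn : A n = ws := by
          simp only [hA, div_self (ne_of_gt hn0)]
          simp
        simpa [hAn] using hfws
      | succ k ih =>
        intro hk
        have hk' : k ≤ n := Nat.le_of_succ_le hk
        have ihk := ih hk'
        have hidx : n - k = (n - (k + 1)) + 1 := by omega
        have hb := hchain (A (n - (k + 1))) (hAnorm _ (by omega)) (A (n - k))
          (by rw [hidx]; exact hstep _)
        have hBpos : (0 : ℝ) < c₄ ^ (∑ j ∈ Finset.range k, 5 ^ j) * c₅ ^ 5 ^ k := by
          positivity
        have h5 : (c₄ ^ (∑ j ∈ Finset.range k, 5 ^ j) * c₅ ^ 5 ^ k) ^ 5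
            ≤ f (A (n - k)) ^ 5 := pow_le_pow_left₀ hBpos.le ihk 5
        have heq : c₄ ^ (∑ j ∈ Finset.range (k + 1), 5 ^ j) * c₅ ^ 5 ^ (k + 1)
            = c₄ * (c₄ ^ (∑ j ∈ Finset.range k, 5 ^ j) * c₅ ^ 5 ^ k) ^ 5 := by
          have hsum : (∑ j ∈ Finset.range (k + 1), 5 ^ j)
              = 5 * (∑ j ∈ Finset.range k, 5 ^ j) + 1 := by
            rw [geom_sum_succ]
          rw [hsum, pow_succ]
          rw [pow_add, pow_mul, pow_mul, pow_one]
          ring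
        rw [heq]
        calc c₄ * (c₄ ^ (∑ j ∈ Finset.range k, 5 ^ j) * c₅ ^ 5 ^ k) ^ 5
            ≤ c₄ * f (A (n - k)) ^ 5 := by
              exact mul_le_mul_of_nonneg_left h5 hc₄.le
          _ ≤ f (A (n - (k + 1))) := hb
    have := main n le_rfl
    simpa [hA] using this
  refine ⟨key, ?_⟩
  set x : ℝ := 2 * (1 - 2 * ν) / ν with hx
  have hxpos : 0 < x := by
    apply div_pos _ hνpos; linarith
  set n := ⌈x⌉₊ with hn
  have h1 : x ≤ (n : ℝ) := Nat.le_ceil x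
  have h2 : (n : ℝ) < x + 1 := Nat.ceil_lt_add_one hxpos.le
  have hxν : x * ν = 2 * (1 - 2 * ν) := by
    rw [hx]; field_simp
  have c1 : 1 - 2 * ν ≤ n * ν / 2 := by
    have := mul_le_mul_of_nonneg_right h1 hνpos.le
    rw [hxν] at this; linarith
  have c2 : (n : ℝ) * ν / 2 ≤ 1 - ν := by
    have := mul_le_mul_of_nonneg_right h2.le hνpos.le
    rw [add_mul, hxν, one_mul] at this; linarith
  refine ⟨c₄ ^ (∑ j ∈ Finset.range n, 5 ^ j) * c₅ ^ 5 ^ n, by positivity,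
    ⟨n, c1, c2, rfl⟩, key n c1 c2⟩
end
end
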